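/- Let d ∈ ℕ^I be nonzero and let θ, ω ∈ ℝ^I lie in the same facet of the hyperplane arrangement ℋ(d), i.e. sgn(f(d,e)(θ)) = sgn(f(d,e)(ω)) for every e ∈ S_d. Let M be an object of 𝒜 with φ(M) = d. Suppose M is θ-semistable and (M_i)_{i=0}^n is a Jordan–Hölder filtration of M with respect to θ. Then M is ω-semistable and (M_i)_{i=0}^n is also a Jordan–Hölder filtration of M with respect to ω. -/

import Mathlib

open CategoryTheory CategoryTheory.Limits

variable {𝒜 : Type*} [Category 𝒜] [Abelian 𝒜] {I : Type*} [Fintype I]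

/-- The `θ`-degree of an object `M`: `deg_θ(M) = ∑ i, θ i * φ i M`. -/
noncomputable def degTheta (φ : I → 𝒜 → ℤ) (θ : I → ℝ) (M : 𝒜) : ℝ :=
  ∑ i, θ i * (φ i M : ℝ)

/-- The rank of an object `M`: `rk(M) = ∑ i, φ i M`. -/
def rkPhi (φ : I → 𝒜 → ℤ) (M : 𝒜) : ℤ := ∑ i, φ i M

/-- The `θ`-slope of an object `M`: `μ_θ(M) = deg_θ(M) / rk(M)`. -/
noncomputable def muSlope (φ : I → 𝒜 → ℤ) (θ : I → ℝ) (M : 𝒜) : ℝ :=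
  degTheta φ θ M / (rkPhi φ M : ℝ)

/-- The family `φ` is additive on short exact sequences. -/
def IsAdditiveFamily (φ : I → 𝒜 → ℤ) : Prop :=
  ∀ i, ∀ S : ShortComplex 𝒜, S.ShortExact → φ i S.X₂ = φ i S.X₁ + φ i S.X₃

/-- The family `φ` is positive. -/
def IsPositiveFamily (φ : I → 𝒜 → ℤ) : Prop :=
  (∀ i, ∀ M : 𝒜, 0 ≤ φ i M) ∧ ∀ M : 𝒜, ¬ IsZero M → ∃ i, 0 < φ i M

/-- `M` is `θ`-semistable: it is nonzero and every nonzero proper subobject has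
slope at most that of `M`. -/
noncomputable def Semistable (φ : I → 𝒜 → ℤ) (θ : I → ℝ) (M : 𝒜) : Prop :=
  ¬ IsZero M ∧ ∀ N : Subobject M, N ≠ ⊥ → N ≠ ⊤ →
    muSlope φ θ ((N : 𝒜)) ≤ muSlope φ θ M

/-- `M` is `θ`-stable. -/
noncomputable def Stable (φ : I → 𝒜 → ℤ) (θ : I → ℝ) (M : 𝒜) : Prop :=
  ¬ IsZero M ∧ ∀ N : Subobject M, N ≠ ⊥ → N ≠ ⊤ →
    muSlope φ θ ((N : 𝒜)) < muSlope φ θ M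


/-- The slope `μ_θ(d)` of a dimension vector `d ∈ ℕ^I`. -/
noncomputable def muSlopeVec (θ : I → ℝ) (d : I → ℕ) : ℝ :=
  (∑ i, θ i * (d i : ℝ)) / (∑ i, (d i : ℝ))

/-- `M` has dimension vector `d`, i.e. `φ i M = d i` for all `i`. -/
def HasDimVec (φ : I → 𝒜 → ℤ) (M : 𝒜) (d : I → ℕ) : Prop :=
  ∀ i, φ i M = (d i : ℤ)

/-- `e ∈ S_d`: `e ∈ ℕ^I \ ℚd` and there exist an object `M` with `φ(M) = d` and a
subobject `N` of `M` with `φ(N) = e`. -/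
def MemSd (φ : I → 𝒜 → ℤ) (d e : I → ℕ) : Prop :=
  (¬ ∃ q : ℚ, ∀ i, (e i : ℚ) = q * (d i : ℚ)) ∧
  ∃ (M : 𝒜) (N : Subobject M), HasDimVec φ M d ∧ HasDimVec φ ((N : 𝒜)) e

/-- `θ` and `ω` lie in the same facet of the hyperplane arrangement `ℋ(d)`:
`sgn (f(d,e)(θ)) = sgn (f(d,e)(ω))` for every `e ∈ S_d`. -/
def SameFacet (φ : I → 𝒜 → ℤ) (d : I → ℕ) (θ ω : I → ℝ) : Prop :=
  ∀ e : I → ℕ, MemSd φ d e →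
    Real.sign (muSlopeVec θ d - muSlopeVec θ e) =
      Real.sign (muSlopeVec ω d - muSlopeVec ω e)

/-- The quotient object `M_{i-1}/M_i` of a decreasing chain of subobjects. -/
noncomputable def quotObj {M : 𝒜} {n : ℕ} (F : Fin (n + 1) → Subobject M)
    (hmono : ∀ i : Fin n, F i.succ ≤ F i.castSucc) (i : Fin n) : 𝒜 :=
  cokernel (Subobject.ofLE (F i.succ) (F i.castSucc) (hmono i))

/-- `(F i)` is a Jordan–Hölder filtration of `M` with respect to `θ`:
`n ≥ 1`, `F 0 = M`, `F n = 0`, each `F (i+1)` is a proper subobject of `F i`, each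
successive quotient is `θ`-stable, and `μ_θ(F i) = μ_θ(M)` for `i = 0, …, n−1`. -/
noncomputable def IsJHFiltration (φ : I → 𝒜 → ℤ) (θ : I → ℝ) {M : 𝒜} {n : ℕ}
    (F : Fin (n + 1) → Subobject M)
    (hmono : ∀ i : Fin n, F i.succ ≤ F i.castSucc) : Prop :=
  1 ≤ n ∧ F 0 = ⊤ ∧ F (Fin.last n) = ⊥ ∧
  (∀ i : Fin n, F i.succ ≠ F i.castSucc) ∧
  (∀ i : Fin n, Stable φ θ (quotObj F hmono i)) ∧
  (∀ i : Fin n, muSlope φ θ (((F i.castSucc) : 𝒜)) = muSlope φ θ M)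

section AuxLemmas

open ZeroObject

lemma phi_isZero (φ : I → 𝒜 → ℤ) (hadd : IsAdditiveFamily φ) (i : I) {X : 𝒜}
    (hX : IsZero X) : φ i X = 0 := by
  have hzero : (𝟙 X) ≫ (𝟙 X) = 0 := hX.eq_of_src _ _
  have hse : (ShortComplex.mk (𝟙 X) (𝟙 X) hzero).ShortExact :=
    { exact := ShortComplex.exact_of_isZero_X₂ _ hX }
  have h := hadd i _ hse
  dsimp at h
  omega

lemma phi_iso (φ : I → 𝒜 → ℤ) (hadd : IsAdditiveFamily φ) (i : I) {X Y : 𝒜}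
    (e : X ≅ Y) : φ i X = φ i Y := by
  have hepi : Epi (0 : Y ⟶ (0 : 𝒜)) :=
    ⟨fun g h _ => (isZero_zero 𝒜).eq_of_src g h⟩
  have hse : (ShortComplex.mk e.hom (0 : Y ⟶ (0 : 𝒜)) comp_zero).ShortExact :=
    { exact := (ShortComplex.exact_iff_epi _ rfl).2 inferInstance
      epi_g := hepi }
  have h := hadd i _ hse
  have h0 : φ i (0 : 𝒜) = 0 := phi_isZero φ hadd i (isZero_zero 𝒜)
  dsimp at h
  omega

lemma phi_biprod (φ : I → 𝒜 → ℤ) (hadd : IsAdditiveFamily φ) (i : I) (X Y : 𝒜) :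
    φ i (X ⊞ Y) = φ i X + φ i Y :=
  hadd i _ (ShortComplex.Splitting.ofHasBinaryBiproduct X Y).shortExact

lemma phi_mono (φ : I → 𝒜 → ℤ) (hadd : IsAdditiveFamily φ) (i : I) {X Y : 𝒜}
    (f : X ⟶ Y) [Mono f] : φ i Y = φ i X + φ i (cokernel f) :=
  hadd i _
    { exact := ShortComplex.exact_of_g_is_cokernel
        (ShortComplex.mk f (cokernel.π f) (cokernel.condition f)) (cokernelIsCokernel f) }

lemma rk_pos (φ : I → 𝒜 → ℤ) (hpos : IsPositiveFamily φ) {X : 𝒜} (hX : ¬ IsZero X) :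
    0 < rkPhi φ X := by
  obtain ⟨i, hi⟩ := hpos.2 X hX
  exact Finset.sum_pos' (fun j _ => hpos.1 j X) ⟨i, Finset.mem_univ i, hi⟩

lemma subobject_eq_bot_of_isZero {M : 𝒜} (N : Subobject M) (h : IsZero ((N : 𝒜))) :
    N = ⊥ := by
  rw [← Subobject.mk_arrow N, Subobject.mk_eq_bot_iff_zero]
  exact h.eq_of_src _ _

lemma isZero_bot_subobject (M : 𝒜) : IsZero (((⊥ : Subobject M) : 𝒜)) :=
  (isZero_zero 𝒜).of_iso Subobject.botCoeIsoZero

lemma hasDimVec_toNat (φ : I → 𝒜 → ℤ) (hpos : IsPositiveFamily φ) (X : 𝒜) :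
    HasDimVec φ X (fun i => (φ i X).toNat) :=
  fun i => by simp [Int.toNat_of_nonneg (hpos.1 i X)]

lemma degTheta_eq_of_dimVec {φ : I → 𝒜 → ℤ} (θ : I → ℝ) {X : 𝒜} {e : I → ℕ}
    (h : HasDimVec φ X e) : degTheta φ θ X = ∑ i, θ i * (e i : ℝ) := by
  have h' : ∀ i, φ i X = (e i : ℤ) := h
  simp only [degTheta, h', Int.cast_natCast]

lemma rk_eq_of_dimVec {φ : I → 𝒜 → ℤ} {X : 𝒜} {e : I → ℕ}
    (h : HasDimVec φ X e) : (rkPhi φ X : ℝ) = ∑ i, (e i : ℝ) := by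
  have h' : ∀ i, φ i X = (e i : ℤ) := h
  simp only [rkPhi, Int.cast_sum, h', Int.cast_natCast]

lemma muSlope_eq_muSlopeVec {φ : I → 𝒜 → ℤ} (θ : I → ℝ) {X : 𝒜} {e : I → ℕ}
    (h : HasDimVec φ X e) : muSlope φ θ X = muSlopeVec θ e := by
  unfold muSlope muSlopeVec
  rw [degTheta_eq_of_dimVec θ h, rk_eq_of_dimVec h]

lemma muSlopeVec_eq_of_rat {I : Type*} [Fintype I] (θ : I → ℝ) {d e : I → ℕ}
    (hq : ∃ q : ℚ, ∀ i, (e i : ℚ) = q * (d i : ℚ))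
    (he : 0 < ∑ i, (e i : ℝ)) :
    muSlopeVec θ e = muSlopeVec θ d := by
  obtain ⟨q, hq⟩ := hq
  have hq' : ∀ i, (e i : ℝ) = (q : ℝ) * (d i : ℝ) := fun i => by
    exact_mod_cast congrArg (Rat.cast : ℚ → ℝ) (hq i)
  have h1 : ∑ i, θ i * (e i : ℝ) = (q : ℝ) * ∑ i, θ i * (d i : ℝ) := by
    rw [Finset.mul_sum]
    exact Finset.sum_congr rfl fun i _ => by rw [hq' i]; ring
  have h2 : ∑ i, (e i : ℝ) = (q : ℝ) * ∑ i, (d i : ℝ) := by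
    rw [Finset.mul_sum]
    exact Finset.sum_congr rfl fun i _ => hq' i
  have hqne : (q : ℝ) ≠ 0 := by
    intro h
    rw [h, zero_mul] at h2
    rw [h2] at he
    exact lt_irrefl _ he
  unfold muSlopeVec
  rw [h1, h2, mul_div_mul_left _ _ hqne]

lemma sign_transfer {x y : ℝ} (h : Real.sign x = Real.sign y) :
    (0 < x → 0 < y) ∧ (x = 0 → y = 0) := by
  constructor
  · intro hx
    rcases lt_trichotomy y 0 with hy | hy | hy
    · rw [Real.sign_of_pos hx, Real.sign_of_neg hy] at h; norm_num at h
    · rw [Real.sign_of_pos hx, hy, Real.sign_zero] at h; norm_num at h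
    · exact hy
  · intro hx
    subst hx
    rw [Real.sign_zero] at h
    exact Real.sign_eq_zero_iff.mp h.symm

end AuxLemmas

/-- if `θ` and `ω` lie in the same facet of `ℋ(d)`, `φ(M) = d`, `M` is
`θ`-semistable and `(M_i)` is a Jordan–Hölder filtration of `M` with respect to `θ`, then
`M` is `ω`-semistable and `(M_i)` is a Jordan–Hölder filtration with respect to `ω`. -/
theorem jhFiltration_of_sameFacet [Nonempty I]
    (φ : I → 𝒜 → ℤ) (hadd : IsAdditiveFamily φ) (hpos : IsPositiveFamily φ)
    (d : I → ℕ) (hd : d ≠ 0) (θ ω : I → ℝ) (hfacet : SameFacet φ d θ ω)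
    (M : 𝒜) (hM : HasDimVec φ M d) (hss : Semistable φ θ M)
    {n : ℕ} (F : Fin (n + 1) → Subobject M)
    (hmono : ∀ i : Fin n, F i.succ ≤ F i.castSucc)
    (hJH : IsJHFiltration φ θ F hmono) :
    Semistable φ ω M ∧ IsJHFiltration φ ω F hmono := by
  obtain ⟨hn, htop, hbot, hproper, hstab, hslope⟩ := hJH
  obtain ⟨hMnz, hss2⟩ := hss
  set cθ := muSlope φ θ M with hcθdef
  set cω := muSlope φ ω M with hcωdef
  have hcθd : cθ = muSlopeVec θ d := muSlope_eq_muSlopeVec θ hM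
  have hcωd : cω = muSlopeVec ω d := muSlope_eq_muSlopeVec ω hM
  -- the key sign-transfer lemma
  have hsign : ∀ (M' : 𝒜), HasDimVec φ M' d → ∀ N : Subobject M', ¬ IsZero ((N : 𝒜)) →
      Real.sign (cθ - muSlope φ θ ((N : 𝒜))) = Real.sign (cω - muSlope φ ω ((N : 𝒜))) := by
    intro M' hM' N hN
    have hNe : HasDimVec φ ((N : 𝒜)) (fun j => (φ j ((N : 𝒜))).toNat) :=
      hasDimVec_toNat φ hpos _
    rw [muSlope_eq_muSlopeVec θ hNe, muSlope_eq_muSlopeVec ω hNe, hcθd, hcωd]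
    by_cases hq : ∃ q : ℚ, ∀ i, (((φ i ((N : 𝒜))).toNat : ℚ)) = q * (d i : ℚ)
    · have heR : (0 : ℝ) < ∑ i, (((φ i ((N : 𝒜))).toNat : ℝ)) := by
        rw [← rk_eq_of_dimVec hNe]
        exact_mod_cast rk_pos φ hpos hN
      rw [muSlopeVec_eq_of_rat θ hq heR, muSlopeVec_eq_of_rat ω hq heR, sub_self, sub_self]
    · exact hfacet _ ⟨hq, M', N, hM', hNe⟩
  -- ω-semistability
  have hSSω : Semistable φ ω M := by
    refine ⟨hMnz, fun N hNb hNt => ?_⟩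
    have hNz : ¬ IsZero ((N : 𝒜)) := fun h => hNb (subobject_eq_bot_of_isZero N h)
    have hs := hsign M hM N hNz
    have hle := hss2 N hNb hNt
    rcases eq_or_lt_of_le hle with heq | hlt
    · have h0 : cθ - muSlope φ θ ((N : 𝒜)) = 0 := by rw [heq]; ring
      have := (sign_transfer hs).2 h0
      linarith
    · have := (sign_transfer hs).1 (by linarith)
      linarith
  -- nonzeroness of the filtration steps
  have hFnz : ∀ i : Fin n, ¬ IsZero ((F i.castSucc : 𝒜)) := by
    intro i h
    have hb : F i.castSucc = ⊥ := subobject_eq_bot_of_isZero _ h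
    have hsb : F i.succ = ⊥ := le_bot_iff.mp (hb ▸ hmono i)
    exact hproper i (hsb.trans hb.symm)
  -- ω-slope condition
  have hslopeω : ∀ i : Fin n, muSlope φ ω ((F i.castSucc : 𝒜)) = cω := by
    intro i
    have hs := hsign M hM _ (hFnz i)
    have h0 : cθ - muSlope φ θ ((F i.castSucc : 𝒜)) = 0 := by rw [hslope i]; ring
    have := (sign_transfer hs).2 h0
    linarith
  -- behaviour of the objects F i.succ
  have hA : ∀ i : Fin n, IsZero ((F i.succ : 𝒜)) ∨
      (muSlope φ θ ((F i.succ : 𝒜)) = cθ ∧ muSlope φ ω ((F i.succ : 𝒜)) = cω) := by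
    intro i
    by_cases h : i.succ = Fin.last n
    · left; rw [h, hbot]; exact isZero_bot_subobject M
    · right
      obtain ⟨j, hj⟩ := Fin.exists_castSucc_eq.2 h
      rw [← hj]
      exact ⟨hslope j, hslopeω j⟩
  -- degree computations
  have degeq : ∀ (θ' : I → ℝ) (c : ℝ) (X : 𝒜), (IsZero X ∨ muSlope φ θ' X = c) →
      degTheta φ θ' X = c * (rkPhi φ X : ℝ) := by
    intro θ' c X h
    by_cases hX : IsZero X
    · have hz : ∀ j, φ j X = 0 := fun j => phi_isZero φ hadd j hX
      simp [degTheta, rkPhi, hz]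
    · rcases h with h | h
      · exact absurd h hX
      · have hr : (0 : ℝ) < (rkPhi φ X : ℝ) := by exact_mod_cast rk_pos φ hpos hX
        rw [muSlope, div_eq_iff (ne_of_gt hr)] at h
        exact h
  have slopeeq : ∀ (θ' : I → ℝ) (c : ℝ) (X : 𝒜), ¬ IsZero X →
      degTheta φ θ' X = c * (rkPhi φ X : ℝ) → muSlope φ θ' X = c := by
    intro θ' c X hX h
    have hr : (0 : ℝ) < (rkPhi φ X : ℝ) := by exact_mod_cast rk_pos φ hpos hX
    rw [muSlope, h, mul_div_assoc, div_self (ne_of_gt hr), mul_one]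
  have degadd : ∀ (θ' : I → ℝ) (X Y Z : 𝒜), (∀ j, φ j X = φ j Y + φ j Z) →
      degTheta φ θ' X = degTheta φ θ' Y + degTheta φ θ' Z ∧
      (rkPhi φ X : ℝ) = (rkPhi φ Y : ℝ) + (rkPhi φ Z : ℝ) := by
    intro θ' X Y Z h
    constructor
    · simp only [degTheta, ← Finset.sum_add_distrib]
      refine Finset.sum_congr rfl fun j _ => ?_
      rw [h j]; push_cast; ring
    · have hz : rkPhi φ X = rkPhi φ Y + rkPhi φ Z := by
        simp only [rkPhi, ← Finset.sum_add_distrib]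
        exact Finset.sum_congr rfl fun j _ => h j
      exact_mod_cast congrArg (Int.cast : ℤ → ℝ) hz
  have key : ∀ (θ' : I → ℝ) (c : ℝ) (i : Fin n),
      muSlope φ θ' ((F i.castSucc : 𝒜)) = c →
      (IsZero ((F i.succ : 𝒜)) ∨ muSlope φ θ' ((F i.succ : 𝒜)) = c) →
      degTheta φ θ' (quotObj F hmono i) = c * (rkPhi φ (quotObj F hmono i) : ℝ) := by
    intro θ' c i hB hA'
    have h := degadd θ' _ _ _
      (fun j => phi_mono φ hadd j (Subobject.ofLE (F i.succ) (F i.castSucc) (hmono i)))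
    have h1 : degTheta φ θ' ((F i.castSucc : 𝒜)) =
        degTheta φ θ' ((F i.succ : 𝒜)) + degTheta φ θ' (quotObj F hmono i) := h.1
    have h2 : (rkPhi φ ((F i.castSucc : 𝒜)) : ℝ) =
        (rkPhi φ ((F i.succ : 𝒜)) : ℝ) + (rkPhi φ (quotObj F hmono i) : ℝ) := h.2
    have hdB : degTheta φ θ' ((F i.castSucc : 𝒜)) =
        c * (rkPhi φ ((F i.castSucc : 𝒜)) : ℝ) := degeq θ' c _ (Or.inr hB)
    have hdA := degeq θ' c _ hA'
    have hrQ : (rkPhi φ (quotObj F hmono i) : ℝ) =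
        (rkPhi φ ((F i.castSucc : 𝒜)) : ℝ) - (rkPhi φ ((F i.succ : 𝒜)) : ℝ) := by
      linarith [h2]
    rw [hrQ, mul_sub]
    linarith [h1]
  -- ω-stability of the quotients
  have hstabω : ∀ i : Fin n, Stable φ ω (quotObj F hmono i) := by
    intro i
    set Q := quotObj F hmono i with hQdef
    set A := ((F i.succ : 𝒜)) with hAdef
    set C := cokernel ((F i.castSucc).arrow) with hCdef
    obtain ⟨hQnz, hQst⟩ := hstab i
    have hAθω := hA i
    have hAθ : IsZero ((F i.succ : 𝒜)) ∨ muSlope φ θ ((F i.succ : 𝒜)) = cθ :=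
      hAθω.imp id And.left
    have hAω : IsZero ((F i.succ : 𝒜)) ∨ muSlope φ ω ((F i.succ : 𝒜)) = cω :=
      hAθω.imp id And.right
    have hQθ : muSlope φ θ (quotObj F hmono i) = cθ :=
      slopeeq θ cθ _ hQnz (key θ cθ i (hslope i) hAθ)
    have hQω : muSlope φ ω (quotObj F hmono i) = cω :=
      slopeeq ω cω _ hQnz (key ω cω i (hslopeω i) hAω)
    refine ⟨hQnz, fun P hPb hPt => ?_⟩
    have hPnz : ¬ IsZero ((P : 𝒜)) := fun h => hPb (subobject_eq_bot_of_isZero P h)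
    have hQdim : ∀ j, φ j ((F i.castSucc : 𝒜)) = φ j A + φ j Q :=
      fun j => phi_mono φ hadd j (Subobject.ofLE (F i.succ) (F i.castSucc) (hmono i))
    have hMdim : ∀ j, φ j M = φ j ((F i.castSucc : 𝒜)) + φ j C :=
      fun j => phi_mono φ hadd j ((F i.castSucc).arrow)
    have hmonom : Mono (biprod.map P.arrow (𝟙 A) ≫ (biprod.inl : Q ⊞ A ⟶ (Q ⊞ A) ⊞ C)) :=
      mono_comp _ _
    set N' : Subobject ((Q ⊞ A) ⊞ C) :=
      Subobject.mk (biprod.map P.arrow (𝟙 A) ≫ (biprod.inl : Q ⊞ A ⟶ (Q ⊞ A) ⊞ C)) with hN'def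
    have hM' : HasDimVec φ ((Q ⊞ A) ⊞ C) d := by
      intro j
      rw [phi_biprod φ hadd, phi_biprod φ hadd]
      have h1 := hQdim j
      have h2 := hMdim j
      have h3 := hM j
      omega
    have hNφ : ∀ j, φ j ((N' : 𝒜)) = φ j ((P : 𝒜)) + φ j A := by
      intro j
      rw [phi_iso φ hadd j (Subobject.underlyingIso _), phi_biprod φ hadd]
    have hNnz : ¬ IsZero ((N' : 𝒜)) := by
      intro h
      obtain ⟨j, hj⟩ := hpos.2 _ hPnz
      have h0 : φ j ((N' : 𝒜)) = 0 := phi_isZero φ hadd j h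
      have hAn := hpos.1 j A
      rw [hNφ j] at h0
      omega
    have hs := hsign _ hM' N' hNnz
    have hPrk : (0 : ℝ) < (rkPhi φ ((P : 𝒜)) : ℝ) := by
      exact_mod_cast rk_pos φ hpos hPnz
    have hNrk : (0 : ℝ) < (rkPhi φ ((N' : 𝒜)) : ℝ) := by
      exact_mod_cast rk_pos φ hpos hNnz
    have hPθ : muSlope φ θ ((P : 𝒜)) < cθ := by
      rw [← hQθ]; exact hQst P hPb hPt
    have hdPθ : degTheta φ θ ((P : 𝒜)) < cθ * (rkPhi φ ((P : 𝒜)) : ℝ) := by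
      rw [muSlope, div_lt_iff₀ hPrk] at hPθ; exact hPθ
    have hdAθ := degeq θ cθ A hAθ
    have hNaddθ := degadd θ _ _ _ hNφ
    have hNθ : muSlope φ θ ((N' : 𝒜)) < cθ := by
      rw [muSlope, div_lt_iff₀ hNrk, hNaddθ.1]
      have hexp : cθ * (rkPhi φ ((N' : 𝒜)) : ℝ) =
          cθ * (rkPhi φ ((P : 𝒜)) : ℝ) + cθ * (rkPhi φ A : ℝ) := by
        rw [hNaddθ.2]; ring
      rw [hexp]
      linarith
    have h1 := (sign_transfer hs).1 (by linarith)
    have hNω : muSlope φ ω ((N' : 𝒜)) < cω := by linarith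
    have hdNω : degTheta φ ω ((N' : 𝒜)) < cω * (rkPhi φ ((N' : 𝒜)) : ℝ) := by
      rw [muSlope, div_lt_iff₀ hNrk] at hNω; exact hNω
    have hNaddω := degadd ω _ _ _ hNφ
    have hdAω := degeq ω cω A hAω
    have hdPω : degTheta φ ω ((P : 𝒜)) < cω * (rkPhi φ ((P : 𝒜)) : ℝ) := by
      have hexp : cω * (rkPhi φ ((N' : 𝒜)) : ℝ) =
          cω * (rkPhi φ ((P : 𝒜)) : ℝ) + cω * (rkPhi φ A : ℝ) := by
        rw [hNaddω.2]; ring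
      rw [hNaddω.1, hexp] at hdNω
      linarith
    rw [hQω, muSlope, div_lt_iff₀ hPrk]
    exact hdPω
  exact ⟨hSSω, hn, htop, hbot, hproper, hstabω, hslopeω⟩
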